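/- arXiv:2408.04466 — 2 statements merged into one kernel-verified Lean document; each statement's English description precedes it below -/
import Mathlib

section
/- For a ray from a point p not on a smooth closed plane curve γ, if the ray meets γ only in transversal intersections, then the winding number of γ around p equals the sum over intersection points of the signs of the crossings (sign of the determinant of the ray direction and the curve tangent, suitably oriented). -/
open Set Complex


private lemma noInt_Ioo {g : ℝ → ℝ} (hg : Continuous g) {a b : ℝ} (hab : a ≤ b)
    (h : ∀ x ∈ Set.Icc a b, ∀ n : ℤ, g x ≠ n) :
    g b ∈ Set.Ioo ((⌊g a⌋ : ℝ)) (⌊g a⌋ + 1) := by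
  constructor
  · by_contra hle
    push_neg at hle
    have h1 : (⌊g a⌋:ℝ) ≤ g a := Int.floor_le _
    have hmem : (⌊g a⌋:ℝ) ∈ Set.Icc (g b) (g a) := ⟨hle, h1⟩
    obtain ⟨x, hx, hgx⟩ := intermediate_value_Icc' hab hg.continuousOn hmem
    exact h x hx ⌊g a⌋ hgx
  · by_contra hle
    push_neg at hle
    have h1 : g a < (⌊g a⌋:ℝ) + 1 := Int.lt_floor_add_one _
    have hmem : (⌊g a⌋:ℝ) + 1 ∈ Set.Icc (g a) (g b) := ⟨h1.le, hle⟩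
    obtain ⟨x, hx, hgx⟩ := intermediate_value_Icc hab hg.continuousOn hmem
    refine h x hx (⌊g a⌋ + 1) ?_
    rw [hgx]; push_cast; ring

private lemma deriv_local_pos {g : ℝ → ℝ} {s d : ℝ} (hd : HasDerivAt g d s) (h0 : 0 < d) :
    ∃ δ > 0, ∀ t, t ≠ s → |t - s| < δ →
      ((s < t → g s < g t) ∧ (t < s → g t < g s)) := by
  have h := hasDerivAt_iff_tendsto_slope.1 hd
  have h2 : ∀ᶠ t in nhdsWithin s {s}ᶜ, 0 < slope g s t := h.eventually (lt_mem_nhds h0)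
  obtain ⟨δ, hδ, hball⟩ := Metric.mem_nhdsWithin_iff.1 h2
  refine ⟨δ, hδ, fun t hts hlt => ?_⟩
  have hs : 0 < slope g s t := by
    refine hball ⟨?_, by simpa using hts⟩
    exact Metric.mem_ball.2 (by simpa [Real.dist_eq] using hlt)
  rw [slope_def_field] at hs
  have hs' : 0 < (g t - g s) / (t - s) := by
    simpa [div_eq_div_iff] using hs
  constructor
  · intro hlt'
    have := (div_pos_iff.1 hs')
    rcases this with ⟨h1, h2⟩ | ⟨h1, h2⟩
    · linarith
    · linarith
  · intro hlt'
    rcases (div_pos_iff.1 hs') with ⟨h1, h2⟩ | ⟨h1, h2⟩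
    · linarith
    · linarith

private lemma deriv_local_neg {g : ℝ → ℝ} {s d : ℝ} (hd : HasDerivAt g d s) (h0 : d < 0) :
    ∃ δ > 0, ∀ t, t ≠ s → |t - s| < δ →
      ((s < t → g t < g s) ∧ (t < s → g s < g t)) := by
  obtain ⟨δ, hδ, hloc⟩ := deriv_local_pos hd.neg (by linarith)
  exact ⟨δ, hδ, fun t hts hlt =>
    ⟨fun h' => by linarith [show -g s < -g t from (hloc t hts hlt).1 h'],
     fun h' => by linarith [show -g t < -g s from (hloc t hts hlt).2 h']⟩⟩

private lemma counting {g : ℝ → ℝ} (hg : Continuous g) (S : Finset ℝ) :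
    ∀ {a b : ℝ}, a ≤ b → (↑S ⊆ Set.Ioo a b) →
    (∀ x ∈ Set.Icc a b, ((∃ n : ℤ, g x = n) ↔ x ∈ S)) →
    (∀ s ∈ S, HasDerivAt g (deriv g s) s ∧ deriv g s ≠ 0) →
    ((⌊g b⌋ : ℝ) - ⌊g a⌋ = ∑ s ∈ S, Real.sign (deriv g s)) := by
  induction S using Finset.strongInduction with
  | _ S ih =>
    intro a b hab hSsub hchar hderiv
    rcases S.eq_empty_or_nonempty with rfl | hne
    · simp only [Finset.sum_empty]
      have h0 : ∀ x ∈ Set.Icc a b, ∀ n : ℤ, g x ≠ n := by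
        intro x hx n he
        have := (hchar x hx).1 ⟨n, he⟩
        simp at this
      have hmem := noInt_Ioo hg hab h0
      have : ⌊g b⌋ = ⌊g a⌋ := Int.floor_eq_iff.2 ⟨hmem.1.le, by push_cast; exact hmem.2⟩
      rw [this]; ring
    · -- inductive step
      set s := S.min' hne with hs_def
      have hsS : s ∈ S := S.min'_mem hne
      obtain ⟨has, hsb⟩ : s ∈ Set.Ioo a b := hSsub hsS
      obtain ⟨k, hk⟩ : ∃ n : ℤ, g s = n := (hchar s ⟨has.le, hsb.le⟩).2 hsS
      obtain ⟨hds, hds0⟩ := hderiv s hsS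
      -- no integer values on [a, x] for x < s
      have hno : ∀ x, a ≤ x → x < s → ∀ y ∈ Set.Icc a x, ∀ n : ℤ, g y ≠ n := by
        intro x hax hxs y hy n he
        have hyb : y ∈ Set.Icc a b := ⟨hy.1, le_trans hy.2 (le_trans hxs.le hsb.le)⟩
        have hyS := (hchar y hyb).1 ⟨n, he⟩
        have := S.min'_le y hyS
        rw [← hs_def] at this
        linarith [hy.2]
      have hleft : ∀ x, a ≤ x → x < s → g x ∈ Set.Ioo ((⌊g a⌋:ℝ)) (⌊g a⌋ + 1) := by
        intro x hax hxs
        exact noInt_Ioo hg hax (hno x hax hxs)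
      -- next point: min of erase ∪ {b}
      set m := (insert b (S.erase s)).min' (Finset.insert_nonempty _ _) with hm_def
      have hm_gt : s < m := by
        have : ∀ x ∈ insert b (S.erase s), s < x := by
          intro x hx
          rcases Finset.mem_insert.1 hx with rfl | hx'
          · exact hsb
          · rcases Finset.mem_erase.1 hx' with ⟨hxne, hxS⟩
            exact lt_of_le_of_ne (S.min'_le x hxS) (Ne.symm hxne)
        exact this m (Finset.min'_mem _ _)
      have hm_le_b : m ≤ b := Finset.min'_le _ b (Finset.mem_insert_self _ _)
      have hm_le : ∀ x ∈ S.erase s, m ≤ x := fun x hx =>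
        Finset.min'_le _ x (Finset.mem_insert_of_mem hx)
      -- no integer values on (s, x] for x < m
      have hno' : ∀ y, s < y → y < m → ∀ n : ℤ, g y ≠ n := by
        intro y hsy hym n he
        have hyb : y ∈ Set.Icc a b := ⟨le_trans has.le hsy.le, le_trans hym.le hm_le_b⟩
        have hyS := (hchar y hyb).1 ⟨n, he⟩
        have hy_ne : y ≠ s := ne_of_gt hsy
        have := hm_le y (Finset.mem_erase.2 ⟨hy_ne, hyS⟩)
        linarith
      -- pick t0 on the left, a' on the right
      rcases Ne.lt_or_gt hds0 with hneg | hpos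
      · -- negative derivative
        obtain ⟨δ, hδ, hloc⟩ := deriv_local_neg hds hneg
        set t₀ := max a (s - δ/2) with ht₀_def
        have ht₀s : t₀ < s := max_lt has (by linarith)
        have hat₀ : a ≤ t₀ := le_max_left _ _
        have ht₀δ : |t₀ - s| < δ := by
          rw [abs_sub_lt_iff]
          exact ⟨by linarith, by linarith [le_max_right a (s - δ/2)]⟩
        have ht₀mem := hleft t₀ hat₀ ht₀s
        set a' := min (s + δ/2) ((s+m)/2) with ha'_def
        have hsa' : s < a' := lt_min (by linarith) (by linarith)
        have ha'm : a' < m := lt_of_le_of_lt (min_le_right _ _) (by linarith)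
        have ha'b : a' ≤ b := le_trans ha'm.le hm_le_b
        have ha'δ : |a' - s| < δ := by
          rw [abs_sub_lt_iff]
          exact ⟨by linarith [min_le_left (s + δ/2) ((s+m)/2)], by linarith⟩
        have haa' : a ≤ a' := le_trans has.le hsa'.le
        have h1 : g a' < g s := (hloc a' (ne_of_gt hsa') ha'δ).1 hsa'
        have h2 : g s < g t₀ := (hloc t₀ (ne_of_lt ht₀s) ht₀δ).2 ht₀s
        -- k = ⌊g a⌋
        have hklt : (k:ℝ) < (⌊g a⌋:ℝ) + 1 := by
          rw [← hk]; exact lt_trans h2 ht₀mem.2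
        have hkge : (⌊g a⌋:ℝ) ≤ (k:ℝ) := by
          by_contra hcon
          push_neg at hcon
          have hmem : (⌊g a⌋:ℝ) ∈ Set.Icc (g s) (g t₀) := ⟨by rw [hk]; exact hcon.le, ht₀mem.1.le⟩
          obtain ⟨y, hy, hgy⟩ := intermediate_value_Icc' ht₀s.le hg.continuousOn hmem
          have hys : y < s := lt_of_le_of_ne hy.2 (by
            intro he; rw [he, hk] at hgy; exact absurd hgy (by exact_mod_cast ne_of_lt hcon))
          exact hno y (le_trans hat₀ hy.1) hys y ⟨le_trans hat₀ hy.1, le_rfl⟩ ⌊g a⌋ hgy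
        have hkeq : k = ⌊g a⌋ := by
          have h3 : (k:ℝ) < ((⌊g a⌋ + 1 : ℤ):ℝ) := by push_cast; linarith
          have h4 : k < ⌊g a⌋ + 1 := by exact_mod_cast h3
          have h5 : ⌊g a⌋ ≤ k := by exact_mod_cast hkge
          omega
        -- g a' ∈ (k-1, k)
        have hga'_lt : g a' < (k:ℝ) := by rw [← hk]; exact h1
        have hga'_gt : ((k:ℤ) - 1 : ℝ) < g a' := by
          by_contra hcon
          push_neg at hcon
          have hmem : ((k:ℝ) - 1) ∈ Set.Icc (g a') (g s) := ⟨hcon, by rw [hk]; linarith⟩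
          obtain ⟨y, hy, hgy⟩ := intermediate_value_Icc' hsa'.le hg.continuousOn hmem
          have hys : s < y := lt_of_le_of_ne hy.1 (by
            intro he; rw [← he, hk] at hgy; linarith [hgy])
          refine hno' y hys (lt_of_le_of_lt hy.2 ha'm) (k - 1) ?_
          rw [hgy]; push_cast; ring
        have hfa' : ⌊g a'⌋ = k - 1 := by
          rw [Int.floor_eq_iff]
          constructor
          · push_cast; push_cast at hga'_gt; linarith
          · push_cast; linarith
        -- apply IH
        have hsub' : ↑(S.erase s) ⊆ Set.Ioo a' b := by
          intro x hx
          rcases Finset.mem_erase.1 hx with ⟨hxne, hxS⟩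
          exact ⟨lt_of_lt_of_le ha'm (hm_le x (Finset.mem_erase.2 ⟨hxne, hxS⟩)),
            (hSsub hxS).2⟩
        have hchar' : ∀ x ∈ Set.Icc a' b, ((∃ n : ℤ, g x = n) ↔ x ∈ S.erase s) := by
          intro x hx
          have hxab : x ∈ Set.Icc a b := ⟨le_trans haa' hx.1, hx.2⟩
          rw [hchar x hxab]
          constructor
          · intro hxS
            exact Finset.mem_erase.2 ⟨ne_of_gt (lt_of_lt_of_le hsa' hx.1), hxS⟩
          · exact fun h => (Finset.mem_erase.1 h).2
        have hIH := ih (S.erase s) (Finset.erase_ssubset hsS) ha'b hsub' hchar'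
          (fun x hx => hderiv x (Finset.mem_erase.1 hx).2)
        rw [← Finset.sum_erase_add _ _ hsS, ← hIH, Real.sign_of_neg hneg, hfa', hkeq]
        push_cast
        ring
      · -- positive derivative
        obtain ⟨δ, hδ, hloc⟩ := deriv_local_pos hds hpos
        set t₀ := max a (s - δ/2) with ht₀_def
        have ht₀s : t₀ < s := max_lt has (by linarith)
        have hat₀ : a ≤ t₀ := le_max_left _ _
        have ht₀δ : |t₀ - s| < δ := by
          rw [abs_sub_lt_iff]
          exact ⟨by linarith, by linarith [le_max_right a (s - δ/2)]⟩
        have ht₀mem := hleft t₀ hat₀ ht₀s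
        set a' := min (s + δ/2) ((s+m)/2) with ha'_def
        have hsa' : s < a' := lt_min (by linarith) (by linarith)
        have ha'm : a' < m := lt_of_le_of_lt (min_le_right _ _) (by linarith)
        have ha'b : a' ≤ b := le_trans ha'm.le hm_le_b
        have ha'δ : |a' - s| < δ := by
          rw [abs_sub_lt_iff]
          exact ⟨by linarith [min_le_left (s + δ/2) ((s+m)/2)], by linarith⟩
        have haa' : a ≤ a' := le_trans has.le hsa'.le
        have h1 : g s < g a' := (hloc a' (ne_of_gt hsa') ha'δ).1 hsa'
        have h2 : g t₀ < g s := (hloc t₀ (ne_of_lt ht₀s) ht₀δ).2 ht₀s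
        -- k = ⌊g a⌋ + 1
        have hkgt : (⌊g a⌋:ℝ) < (k:ℝ) := by
          rw [← hk]; exact lt_trans ht₀mem.1 h2
        have hkle : (k:ℝ) ≤ (⌊g a⌋:ℝ) + 1 := by
          by_contra hcon
          push_neg at hcon
          have hmem : ((⌊g a⌋:ℝ) + 1) ∈ Set.Icc (g t₀) (g s) :=
            ⟨ht₀mem.2.le, by rw [hk]; linarith⟩
          obtain ⟨y, hy, hgy⟩ := intermediate_value_Icc ht₀s.le hg.continuousOn hmem
          have hys : y < s := lt_of_le_of_ne hy.2 (by
            intro he; rw [he, hk] at hgy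
            have : ((⌊g a⌋:ℝ) + 1) < (k:ℝ) := hcon
            linarith [hgy])
          refine hno y (le_trans hat₀ hy.1) hys y ⟨le_trans hat₀ hy.1, le_rfl⟩ (⌊g a⌋ + 1) ?_
          rw [hgy]; push_cast; ring
        have hkeq : k = ⌊g a⌋ + 1 := by
          have h4 : ⌊g a⌋ < k := by exact_mod_cast hkgt
          have h5 : (k:ℝ) ≤ ((⌊g a⌋ + 1 : ℤ):ℝ) := by push_cast; linarith
          have h6 : k ≤ ⌊g a⌋ + 1 := by exact_mod_cast h5
          omega
        -- g a' ∈ (k, k+1)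
        have hga'_gt : (k:ℝ) < g a' := by rw [← hk]; exact h1
        have hga'_lt : g a' < (k:ℝ) + 1 := by
          by_contra hcon
          push_neg at hcon
          have hmem : ((k:ℝ) + 1) ∈ Set.Icc (g s) (g a') := ⟨by rw [hk]; linarith, hcon⟩
          obtain ⟨y, hy, hgy⟩ := intermediate_value_Icc hsa'.le hg.continuousOn hmem
          have hys : s < y := lt_of_le_of_ne hy.1 (by
            intro he; rw [← he, hk] at hgy; linarith [hgy])
          refine hno' y hys (lt_of_le_of_lt hy.2 ha'm) (k + 1) ?_
          rw [hgy]; push_cast; ring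
        have hfa' : ⌊g a'⌋ = k := by
          rw [Int.floor_eq_iff]
          exact ⟨hga'_gt.le, by push_cast; linarith⟩
        -- apply IH
        have hsub' : ↑(S.erase s) ⊆ Set.Ioo a' b := by
          intro x hx
          rcases Finset.mem_erase.1 hx with ⟨hxne, hxS⟩
          exact ⟨lt_of_lt_of_le ha'm (hm_le x (Finset.mem_erase.2 ⟨hxne, hxS⟩)),
            (hSsub hxS).2⟩
        have hchar' : ∀ x ∈ Set.Icc a' b, ((∃ n : ℤ, g x = n) ↔ x ∈ S.erase s) := by
          intro x hx
          have hxab : x ∈ Set.Icc a b := ⟨le_trans haa' hx.1, hx.2⟩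
          rw [hchar x hxab]
          constructor
          · intro hxS
            exact Finset.mem_erase.2 ⟨ne_of_gt (lt_of_lt_of_le hsa' hx.1), hxS⟩
          · exact fun h => (Finset.mem_erase.1 h).2
        have hIH := ih (S.erase s) (Finset.erase_ssubset hsS) ha'b hsub' hchar'
          (fun x hx => hderiv x (Finset.mem_erase.1 hx).2)
        rw [← Finset.sum_erase_add _ _ hsS, ← hIH, Real.sign_of_pos hpos, hfa', hkeq]
        push_cast
        ring


private lemma exp_arctan {z : ℂ} (hz : 0 < z.re) :
    (‖z‖ : ℂ) * Complex.exp ((Real.arctan (z.im / z.re) : ℝ) * Complex.I) = z := by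
  have hz0 : z ≠ 0 := fun h => by simp [h] at hz
  set q := z.im / z.re with hq
  have hcos : Real.cos (Real.arctan q) = 1 / Real.sqrt (1 + q ^ 2) := Real.cos_arctan q
  have hsin : Real.sin (Real.arctan q) = q / Real.sqrt (1 + q ^ 2) := Real.sin_arctan q
  have hnorm : ‖z‖ = Real.sqrt (z.re ^ 2 + z.im ^ 2) := by
    rw [Complex.norm_def, Complex.normSq_apply]; ring_nf
  have hsq : Real.sqrt (1 + q ^ 2) = Real.sqrt (z.re ^ 2 + z.im ^ 2) / z.re := by
    rw [eq_div_iff (ne_of_gt hz), ← Real.sqrt_sq hz.le]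
    rw [← Real.sqrt_mul (by positivity)]
    congr 1
    field_simp [hq]
    rw [Real.sq_sqrt (sq_nonneg _), hq]
    field_simp
  have hsqrt_pos : 0 < Real.sqrt (z.re ^ 2 + z.im ^ 2) := by
    apply Real.sqrt_pos.2; positivity
  rw [Complex.exp_mul_I]
  apply Complex.ext
  · simp only [Complex.add_re, Complex.mul_re, Complex.ofReal_re, Complex.ofReal_im,
      Complex.cos_ofReal_re, Complex.cos_ofReal_im, Complex.mul_im, Complex.I_re, Complex.I_im,
      Complex.sin_ofReal_re, Complex.sin_ofReal_im]
    rw [hcos, hnorm, hsq]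
    simp only [mul_zero, zero_mul, sub_zero, add_zero, zero_add, mul_one]
    field_simp
  · simp only [Complex.add_im, Complex.mul_im, Complex.ofReal_re, Complex.ofReal_im,
      Complex.cos_ofReal_re, Complex.cos_ofReal_im, Complex.mul_re, Complex.I_re, Complex.I_im,
      Complex.sin_ofReal_re, Complex.sin_ofReal_im]
    rw [hsin, hnorm, hsq]
    simp only [mul_zero, zero_mul, sub_zero, add_zero, zero_add, mul_one]
    field_simp [hq]
    rw [hq]
    field_simp

private lemma int_valued_const {f : ℝ → ℝ} {x y : ℝ} (hxy : x ≤ y)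
    (hf : ContinuousOn f (Set.Icc x y))
    (h : ∀ t ∈ Set.Icc x y, ∃ n : ℤ, f t = 2 * Real.pi * n) : f y = f x := by
  obtain ⟨n, hn⟩ := h x ⟨le_rfl, hxy⟩
  obtain ⟨m, hm⟩ := h y ⟨hxy, le_rfl⟩
  have hpi := Real.pi_pos
  rcases lt_trichotomy n m with hlt | heq | hgt
  · exfalso
    have hval : (2 * Real.pi * n + Real.pi) ∈ Set.Icc (f x) (f y) := by
      constructor
      · rw [hn]; linarith
      · rw [hm]
        have : (n : ℝ) + 1 ≤ m := by exact_mod_cast hlt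
        nlinarith
    obtain ⟨t, ht, hft⟩ := intermediate_value_Icc hxy hf hval
    obtain ⟨k, hk⟩ := h t ht
    rw [hk] at hft
    have : (2 : ℝ) * k = 2 * n + 1 := by
      have h2 : Real.pi * (2 * k) = Real.pi * (2 * n + 1) := by linarith
      have := mul_left_cancel₀ (ne_of_gt hpi) h2
      linarith
    have : (2 * k : ℤ) = 2 * n + 1 := by exact_mod_cast this
    omega
  · rw [hn, hm, heq]
  · exfalso
    have hval : (2 * Real.pi * m + Real.pi) ∈ Set.Icc (f y) (f x) := by
      constructor
      · rw [hm]; linarith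
      · rw [hn]
        have : (m : ℝ) + 1 ≤ n := by exact_mod_cast hgt
        nlinarith
    obtain ⟨t, ht, hft⟩ := intermediate_value_Icc' hxy hf hval
    obtain ⟨k, hk⟩ := h t ht
    rw [hk] at hft
    have : (2 : ℝ) * k = 2 * m + 1 := by
      have h2 : Real.pi * (2 * k) = Real.pi * (2 * m + 1) := by linarith
      have := mul_left_cancel₀ (ne_of_gt hpi) h2
      linarith
    have : (2 * k : ℤ) = 2 * m + 1 := by exact_mod_cast this
    omega

private lemma theta_hasDerivAt {γ : ℝ → ℂ} {p : ℂ} {θ : ℝ → ℝ}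
    (hγc : Continuous γ) (hθ : Continuous θ)
    (hps : ∀ t, γ t ≠ p)
    (hlift : ∀ t, γ t - p = (‖γ t - p‖ : ℂ) * Complex.exp (θ t * Complex.I))
    (s : ℝ) (hγd : HasDerivAt γ (deriv γ s) s) :
    HasDerivAt θ ((deriv γ s * Complex.exp (-(θ s) * Complex.I)).im / ‖γ s - p‖) s := by
  set u : ℝ → ℂ := fun t => (γ t - p) * Complex.exp (-(θ s) * Complex.I) with hu_def
  have hu : HasDerivAt u (deriv γ s * Complex.exp (-(θ s) * Complex.I)) s :=
    (hγd.sub_const p).mul_const _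
  have hu_cont : Continuous u := (hγc.sub continuous_const).mul continuous_const
  set r := ‖γ s - p‖ with hr_def
  have hr : 0 < r := norm_pos_iff.2 (sub_ne_zero.2 (hps s))
  have hus : u s = (r : ℂ) := by
    rw [hu_def]
    simp only
    rw [hlift s, mul_assoc, ← Complex.exp_add]
    rw [show ((θ s : ℂ) * Complex.I + -(θ s : ℂ) * Complex.I) = 0 by ring, Complex.exp_zero,
      mul_one]
  have husre : 0 < (u s).re := by rw [hus]; simpa using hr
  -- neighborhood where Re u > 0
  have hopen : IsOpen {x : ℝ | 0 < (u x).re} :=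
    isOpen_lt continuous_const (Complex.continuous_re.comp hu_cont)
  obtain ⟨η, hη, hball⟩ := Metric.isOpen_iff.1 hopen s husre
  -- the local lift via arctan
  set φ : ℝ → ℝ := fun x => Real.arctan ((u x).im / (u x).re) with hφ_def
  have hre_pos : ∀ x ∈ Metric.ball s η, 0 < (u x).re := fun x hx => hball hx
  have hnorm_u : ∀ x, ‖u x‖ = ‖γ x - p‖ := by
    intro x
    rw [hu_def]
    simp only
    rw [norm_mul, Complex.norm_exp]
    simp
  have hu_eq : ∀ x, u x = (‖γ x - p‖ : ℂ) * Complex.exp ((θ x - θ s) * Complex.I) := by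
    intro x
    have h := hlift x
    rw [hu_def]
    simp only
    calc (γ x - p) * Complex.exp (-(θ s : ℂ) * Complex.I)
        = ((‖γ x - p‖ : ℂ) * Complex.exp ((θ x : ℂ) * Complex.I)) *
            Complex.exp (-(θ s : ℂ) * Complex.I) := by rw [← h]
      _ = (‖γ x - p‖ : ℂ) * Complex.exp ((θ x - θ s : ℂ) * Complex.I) := by
          rw [mul_assoc, ← Complex.exp_add]
          congr 1
          congr 1
          ring
  have hkey : ∀ x ∈ Metric.ball s η, ∃ n : ℤ, θ x - θ s - φ x = 2 * Real.pi * n := by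
    intro x hx
    have h1 : (‖u x‖ : ℂ) * Complex.exp ((φ x : ℝ) * Complex.I) = u x :=
      exp_arctan (hre_pos x hx)
    have h2 : (‖u x‖ : ℂ) * Complex.exp ((θ x - θ s) * Complex.I) = u x := by
      rw [hnorm_u]; exact (hu_eq x).symm
    have hne : (‖u x‖ : ℂ) ≠ 0 := by
      simp only [ne_eq, Complex.ofReal_eq_zero, norm_eq_zero, hu_def]
      exact mul_ne_zero (sub_ne_zero.2 (hps x)) (Complex.exp_ne_zero _)
    have h3 : Complex.exp ((θ x - θ s) * Complex.I) = Complex.exp ((φ x : ℝ) * Complex.I) :=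
      mul_left_cancel₀ hne (h2.trans h1.symm)
    have h4 : Complex.exp (((θ x - θ s - φ x : ℝ)) * Complex.I) = 1 := by
      have heq : ((θ x - θ s - φ x : ℝ) : ℂ) * Complex.I =
          ((↑(θ x) - ↑(θ s)) * Complex.I) - ((φ x : ℝ) * Complex.I) := by push_cast; ring
      rw [heq, Complex.exp_sub, h3, div_self (Complex.exp_ne_zero _)]
    obtain ⟨n, hn⟩ := Complex.exp_eq_one_iff.1 h4
    refine ⟨n, ?_⟩
    have h5 : ((θ x - θ s - φ x : ℝ) : ℂ) = (n : ℂ) * (2 * Real.pi) := by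
      apply mul_right_cancel₀ Complex.I_ne_zero
      rw [hn]; ring
    have h6 : (θ x - θ s - φ x : ℝ) = (n : ℝ) * (2 * Real.pi) := by exact_mod_cast h5
    linarith
  have hφs : φ s = 0 := by
    rw [hφ_def]
    simp only
    rw [hus]
    simp [Real.arctan_zero]
  have hφ_cont : ContinuousOn φ (Metric.ball s η) := by
    apply Real.continuous_arctan.comp_continuousOn
    apply ContinuousOn.div
    · exact (Complex.continuous_im.comp hu_cont).continuousOn
    · exact (Complex.continuous_re.comp hu_cont).continuousOn
    · exact fun x hx => ne_of_gt (hre_pos x hx)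
  -- θ x = θ s + φ x on the ball
  have hloc : ∀ x ∈ Metric.ball s η, θ x = θ s + φ x := by
    intro x hx
    have hIcc : Set.uIcc s x ⊆ Metric.ball s η := by
      rw [Real.ball_eq_Ioo]
      rw [Real.ball_eq_Ioo] at hx
      exact Set.OrdConnected.uIcc_subset Set.ordConnected_Ioo
        ⟨by linarith, by linarith⟩ hx
    set ψ : ℝ → ℝ := fun x => θ x - θ s - φ x with hψ_def
    have hψ_cont : ContinuousOn ψ (Metric.ball s η) :=
      ((hθ.continuousOn).sub continuousOn_const).sub hφ_cont
    have hψs : ψ s = 0 := by rw [hψ_def]; simp [hφs]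
    have : ψ x = ψ s := by
      rcases le_or_gt s x with hsx | hxs
      · apply int_valued_const hsx (hψ_cont.mono (by
          rw [Set.uIcc_of_le hsx] at hIcc; exact hIcc))
        intro t ht
        exact hkey t (hIcc (by rw [Set.uIcc_of_le hsx]; exact ht))
      · exact (int_valued_const hxs.le (hψ_cont.mono (by
          rw [Set.uIcc_of_ge hxs.le] at hIcc; exact hIcc))
          (fun t ht => hkey t (hIcc (by rw [Set.uIcc_of_ge hxs.le]; exact ht)))).symm
    rw [hψs] at this
    rw [hψ_def] at this
    simp only at this
    linarith
  -- derivative of φ at s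
  have him : HasDerivAt (fun x => (u x).im) (deriv γ s * Complex.exp (-(θ s) * Complex.I)).im s :=
    Complex.imCLM.hasFDerivAt.comp_hasDerivAt s hu
  have hre : HasDerivAt (fun x => (u x).re) (deriv γ s * Complex.exp (-(θ s) * Complex.I)).re s :=
    Complex.reCLM.hasFDerivAt.comp_hasDerivAt s hu
  have hq : HasDerivAt (fun x => (u x).im / (u x).re)
      (((deriv γ s * Complex.exp (-(θ s) * Complex.I)).im * (u s).re -
        (u s).im * (deriv γ s * Complex.exp (-(θ s) * Complex.I)).re) / ((u s).re) ^ 2) s :=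
    him.div hre (ne_of_gt husre)
  have hφd : HasDerivAt φ ((deriv γ s * Complex.exp (-(θ s) * Complex.I)).im / r) s := by
    have harc := Real.hasDerivAt_arctan ((u s).im / (u s).re)
    have hcomp := harc.comp s hq
    refine hcomp.congr_deriv ?_
    rw [hus]
    simp only [Complex.ofReal_re, Complex.ofReal_im]
    rw [zero_div]
    field_simp
    ring
  have hθd : HasDerivAt (fun x => θ s + φ x)
      ((deriv γ s * Complex.exp (-(θ s) * Complex.I)).im / r) s := hφd.const_add _
  apply hθd.congr_of_eventuallyEq
  filter_upwards [Metric.ball_mem_nhds s hη] with x hx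
  exact hloc x hx

/-- For a C¹ closed (1-periodic) plane curve `γ`, a point `p` off the curve and a
unit direction `v` such that the ray `{p + t v : t > 0}` meets the curve in finitely
many points, each a transversal crossing, the winding number of `γ` around `p`
(the total argument change divided by `2π`) equals the sum over the crossings of
the crossing signs `sign (det (v, γ'(s)))`. -/
theorem winding_number_eq_sum_of_crossing_signs
    (γ : ℝ → ℂ) (hγ : ContDiff ℝ 1 γ) (hper : Function.Periodic γ 1)
    (p : ℂ) (hp : p ∉ Set.range γ)
    (v : ℂ) (hv : ‖v‖ = 1)
    (T : Finset ℝ) (hT : ↑T ⊆ Set.Ico (0:ℝ) 1)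
    (hray : ∀ s ∈ Set.Ico (0:ℝ) 1, (∃ t > (0:ℝ), γ s = p + t • v) ↔ s ∈ T)
    (htrans : ∀ s ∈ T, v.re * (deriv γ s).im - v.im * (deriv γ s).re ≠ 0)
    (θ : ℝ → ℝ) (hθ : Continuous θ)
    (hlift : ∀ t, γ t - p = (‖γ t - p‖ : ℂ) * Complex.exp (θ t * Complex.I)) :
    θ 1 - θ 0 =
      2 * Real.pi * ∑ s ∈ T, Real.sign (v.re * (deriv γ s).im - v.im * (deriv γ s).re) := by
  classical
  have hpi := Real.pi_pos
  have hps : ∀ t, γ t ≠ p := fun t ht => hp ⟨t, ht⟩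
  have hγc : Continuous γ := hγ.continuous
  have hγd : ∀ s, HasDerivAt γ (deriv γ s) s := fun s =>
    ((hγ.differentiable one_ne_zero) s).hasDerivAt
  have hnorm_ne : ∀ t, (‖γ t - p‖ : ℂ) ≠ 0 := by
    intro t
    simp only [ne_eq, Complex.ofReal_eq_zero, norm_eq_zero]
    exact sub_ne_zero.2 (hps t)
  -- exp of the lift is periodic
  have hexp_eq : ∀ t, Complex.exp ((θ (t+1) : ℂ) * Complex.I)
      = Complex.exp ((θ t : ℂ) * Complex.I) := by
    intro t
    have h1 := hlift (t+1)
    rw [hper t] at h1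
    exact mul_left_cancel₀ (hnorm_ne t) (h1.symm.trans (hlift t))
  -- the offset function is constant
  have hval : ∀ x : ℝ, ∃ n : ℤ, (θ (x+1) - θ x) = 2 * Real.pi * n := by
    intro x
    have h4 : Complex.exp ((θ (x+1) - θ x : ℝ) * Complex.I) = 1 := by
      have heq : ((θ (x+1) - θ x : ℝ) : ℂ) * Complex.I =
          ((θ (x+1) : ℂ) * Complex.I) - ((θ x : ℂ) * Complex.I) := by push_cast; ring
      rw [heq, Complex.exp_sub, hexp_eq x, div_self (Complex.exp_ne_zero _)]
    obtain ⟨n, hn⟩ := Complex.exp_eq_one_iff.1 h4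
    refine ⟨n, ?_⟩
    have h5 : ((θ (x+1) - θ x : ℝ) : ℂ) = (n : ℂ) * (2 * Real.pi) :=
      mul_right_cancel₀ Complex.I_ne_zero (by rw [hn]; ring)
    have h6 : (θ (x+1) - θ x : ℝ) = (n : ℝ) * (2 * Real.pi) := by exact_mod_cast h5
    linarith
  have hconst : ∀ t : ℝ, θ (t+1) - θ t = θ 1 - θ 0 := by
    have hcont : Continuous fun x : ℝ => θ (x+1) - θ x :=
      (hθ.comp (continuous_id.add continuous_const)).sub hθ
    intro t
    have h01 : θ (0+1) - θ 0 = θ 1 - θ 0 := by norm_num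
    rcases le_or_gt 0 t with h | h
    · rw [← h01]
      exact int_valued_const h hcont.continuousOn (fun x _ => hval x)
    · rw [← h01]
      exact (int_valued_const h.le hcont.continuousOn (fun x _ => hval x)).symm
  obtain ⟨N, hN⟩ : ∃ n : ℤ, θ 1 - θ 0 = 2 * Real.pi * n := by
    obtain ⟨n, hn⟩ := hval 0
    exact ⟨n, by rw [← hn]; norm_num⟩
  -- the direction as an exponential
  set α := Complex.arg v with hα_def
  have hva : Complex.exp ((α : ℂ) * Complex.I) = v := by
    have := Complex.norm_mul_exp_arg_mul_I v
    rwa [show ‖v‖ = 1 by rw [hv], Complex.ofReal_one,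
      one_mul] at this
  -- the normalized lift
  set g : ℝ → ℝ := fun x => (θ x - α) / (2 * Real.pi) with hg_def
  have hg_cont : Continuous g := (hθ.sub continuous_const).div_const _
  -- crossing criterion via exp
  have hint_iff : ∀ x : ℝ, (∃ n : ℤ, g x = n) ↔ Complex.exp ((θ x : ℂ) * Complex.I) = v := by
    intro x
    constructor
    · rintro ⟨n, hn⟩
      have hθx : θ x = α + 2 * Real.pi * n := by
        rw [hg_def] at hn
        simp only at hn
        have : θ x - α = 2 * Real.pi * n := by
          field_simp at hn
          linarith
        linarith
      rw [hθx]
      push_cast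
      rw [add_mul, Complex.exp_add, hva]
      have h1 : Complex.exp ((2 * Real.pi * n : ℂ) * Complex.I) = 1 := by
        rw [Complex.exp_eq_one_iff]
        exact ⟨n, by ring⟩
      rw [h1, mul_one]
    · intro hx
      have h4 : Complex.exp ((θ x - α : ℝ) * Complex.I) = 1 := by
        have heq : ((θ x - α : ℝ) : ℂ) * Complex.I =
            ((θ x : ℂ) * Complex.I) - ((α : ℂ) * Complex.I) := by push_cast; ring
        rw [heq, Complex.exp_sub, hx, ← hva, div_self (Complex.exp_ne_zero _)]
      obtain ⟨n, hn⟩ := Complex.exp_eq_one_iff.1 h4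
      have h5 : ((θ x - α : ℝ) : ℂ) = (n : ℂ) * (2 * Real.pi) :=
        mul_right_cancel₀ Complex.I_ne_zero (by rw [hn]; ring)
      have h6 : (θ x - α : ℝ) = (n : ℝ) * (2 * Real.pi) := by exact_mod_cast h5
      refine ⟨n, ?_⟩
      rw [hg_def]
      simp only
      rw [h6]
      field_simp
  -- crossing criterion on [0,1)
  have hcross : ∀ x ∈ Set.Ico (0:ℝ) 1, ((∃ n : ℤ, g x = n) ↔ x ∈ T) := by
    intro x hx
    rw [← hray x hx, hint_iff x]
    constructor
    · intro hex
      refine ⟨‖γ x - p‖, norm_pos_iff.2 (sub_ne_zero.2 (hps x)), ?_⟩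
      have := hlift x
      rw [hex] at this
      rw [Complex.real_smul]
      linear_combination this
    · rintro ⟨t, ht, hxt⟩
      have h1 : γ x - p = (t : ℂ) * v := by
        rw [hxt, Complex.real_smul]; ring
      have hnx : ‖γ x - p‖ = t := by
        rw [h1, norm_mul, hv, mul_one, Complex.norm_real, Real.norm_eq_abs, abs_of_pos ht]
      have h2 : (t : ℂ) * v = (t : ℂ) * Complex.exp ((θ x : ℂ) * Complex.I) := by
        rw [← h1, hlift x, hnx]
      exact (mul_left_cancel₀ (by exact_mod_cast ne_of_gt ht) h2).symm
  -- derivative of g at crossing points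
  have hD : ∀ x : ℝ, (∃ t > (0:ℝ), γ x = p + t • v) →
      HasDerivAt g (((v.re * (deriv γ x).im - v.im * (deriv γ x).re) / ‖γ x - p‖)
        / (2 * Real.pi)) x := by
    rintro x ⟨t, ht, hxt⟩
    have hgen := theta_hasDerivAt hγc hθ hps hlift x (hγd x)
    have h1 : γ x - p = (t : ℂ) * v := by rw [hxt, Complex.real_smul]; ring
    have hnx : ‖γ x - p‖ = t := by
      rw [h1, norm_mul, hv, mul_one, Complex.norm_real, Real.norm_eq_abs, abs_of_pos ht]
    have hvx : Complex.exp ((θ x : ℂ) * Complex.I) = v := by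
      have h2 : (t : ℂ) * v = (t : ℂ) * Complex.exp ((θ x : ℂ) * Complex.I) := by
        rw [← h1, hlift x, hnx]
      exact (mul_left_cancel₀ (by exact_mod_cast ne_of_gt ht) h2).symm
    have hconj : Complex.exp (-(θ x : ℂ) * Complex.I) = (starRingEnd ℂ) v := by
      rw [← hvx, ← Complex.exp_conj]
      congr 1
      rw [map_mul, Complex.conj_ofReal, Complex.conj_I]
      ring
    have hIm : (deriv γ x * Complex.exp (-(θ x : ℂ) * Complex.I)).im
        = v.re * (deriv γ x).im - v.im * (deriv γ x).re := by
      rw [hconj]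
      rw [Complex.mul_im, Complex.conj_re, Complex.conj_im]
      ring
    have hfinal := (hgen.sub_const α).div_const (2 * Real.pi)
    rw [hIm] at hfinal
    exact hfinal
  -- periodicity of deriv γ
  have hderiv_per : ∀ s : ℝ, deriv γ (s+1) = deriv γ s := by
    intro s
    have h1 : HasDerivAt (fun t => γ (t+1)) (deriv γ (s+1)) s := by
      have hid : HasDerivAt (fun t : ℝ => t + 1) 1 s := by
        simpa using (hasDerivAt_id s).add_const 1
      have := HasDerivAt.scomp s (hγd (s+1)) hid
      simp only [one_smul] at this; exact this
    have h2 : (fun t : ℝ => γ (t+1)) = γ := funext hper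
    rw [h2] at h1
    exact h1.deriv.symm
  -- choose base point a
  obtain ⟨a, haI, haT⟩ : ∃ a, a ∈ Set.Ioo (0:ℝ) 1 \ ↑T := by
    have hinf : ((Set.Ioo (0:ℝ) 1) \ ↑T).Infinite :=
      (Set.Ioo_infinite zero_lt_one).diff T.finite_toSet
    exact hinf.nonempty
  obtain ⟨ha0, ha1⟩ := haI
  set f : ℝ → ℝ := fun s => if s < a then s + 1 else s with hf_def
  set S : Finset ℝ := T.image f with hS_def
  have hTmem : ∀ s ∈ T, 0 ≤ s ∧ s < 1 := fun s hs => ⟨(hT hs).1, (hT hs).2⟩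
  have hfmem : ∀ s ∈ T, f s ∈ Set.Ioo a (a+1) ∧ (s < a → f s = s + 1) ∧
      (¬ s < a → f s = s) := by
    intro s hs
    obtain ⟨h0, h1⟩ := hTmem s hs
    by_cases hsa : s < a
    · refine ⟨?_, fun _ => if_pos hsa, fun h => absurd hsa h⟩
      rw [hf_def]; simp only [if_pos hsa]
      exact ⟨by linarith, by linarith⟩
    · have hne : a ≠ s := fun h => haT (by rw [h]; exact hs)
      have hsa' : a < s := lt_of_le_of_ne (not_lt.1 hsa) hne
      refine ⟨?_, fun h => absurd h hsa, fun _ => if_neg hsa⟩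
      rw [hf_def]; simp only [if_neg hsa]
      exact ⟨hsa', by linarith⟩
  have hS_sub : ↑S ⊆ Set.Ioo a (a+1) := by
    intro x hx
    simp only [hS_def, Finset.coe_image, Set.mem_image, Finset.mem_coe] at hx
    obtain ⟨s, hs, rfl⟩ := hx
    exact (hfmem s hs).1
  have hchar : ∀ x ∈ Set.Icc a (a+1), ((∃ n : ℤ, g x = n) ↔ x ∈ S) := by
    intro x hx
    by_cases hx1 : x < 1
    · have hx01 : x ∈ Set.Ico (0:ℝ) 1 := ⟨le_trans ha0.le hx.1, hx1⟩
      rw [hcross x hx01]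
      constructor
      · intro hxT
        have hne : a ≠ x := fun h => haT (by rw [h]; exact hxT)
        have hax : a < x := lt_of_le_of_ne hx.1 hne
        refine Finset.mem_image.2 ⟨x, hxT, ?_⟩
        rw [hf_def]; simp only [if_neg (not_lt.2 hax.le)]
      · intro hxS
        obtain ⟨s, hs, hfs⟩ := Finset.mem_image.1 hxS
        by_cases hsa : s < a
        · exfalso
          rw [(hfmem s hs).2.1 hsa] at hfs
          obtain ⟨h0, _⟩ := hTmem s hs
          linarith
        · rw [(hfmem s hs).2.2 hsa] at hfs
          rwa [← hfs]
    · push_neg at hx1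
      have hx01 : x - 1 ∈ Set.Ico (0:ℝ) 1 := ⟨by linarith, by linarith [hx.2]⟩
      have hθx : θ x = θ (x-1) + (2 * Real.pi * N) := by
        have h := hconst (x-1)
        have h' : x - 1 + 1 = x := by ring
        rw [h'] at h
        rw [← hN]; linarith
      have hgx : g x = g (x-1) + N := by
        rw [hg_def]; simp only; rw [hθx]; field_simp; ring
      have hiff : (∃ n : ℤ, g x = n) ↔ (∃ n : ℤ, g (x-1) = n) := by
        constructor
        · rintro ⟨n, hn⟩
          refine ⟨n - N, ?_⟩
          rw [hgx] at hn; push_cast; linarith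
        · rintro ⟨n, hn⟩
          exact ⟨n + N, by rw [hgx, hn]; push_cast; ring⟩
      rw [hiff, hcross (x-1) hx01]
      constructor
      · intro hxT
        have hs_lt : x - 1 < a := by
          rcases lt_or_eq_of_le (by linarith [hx.2] : x - 1 ≤ a) with h | h
          · exact h
          · exact absurd (by rw [h] at hxT; exact hxT) haT
        refine Finset.mem_image.2 ⟨x - 1, hxT, ?_⟩
        rw [(hfmem _ hxT).2.1 hs_lt]; ring
      · intro hxS
        obtain ⟨s, hs, hfs⟩ := Finset.mem_image.1 hxS
        by_cases hsa : s < a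
        · rw [(hfmem s hs).2.1 hsa] at hfs
          have hse : x - 1 = s := by linarith
          rwa [hse]
        · exfalso
          rw [(hfmem s hs).2.2 hsa] at hfs
          obtain ⟨_, h1⟩ := hTmem s hs
          linarith
  have hmain : ∀ s ∈ T, HasDerivAt g (((v.re * (deriv γ s).im - v.im * (deriv γ s).re)
      / ‖γ s - p‖) / (2 * Real.pi)) (f s) := by
    intro s hs
    obtain ⟨t, ht, hst⟩ := (hray s (hT hs)).2 hs
    by_cases hsa : s < a
    · rw [(hfmem s hs).2.1 hsa]
      have hcross' : ∃ t > (0:ℝ), γ (s+1) = p + t • v := ⟨t, ht, by rw [hper s]; exact hst⟩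
      have h := hD (s+1) hcross'
      rw [hderiv_per s, hper s] at h
      exact h
    · rw [(hfmem s hs).2.2 hsa]
      exact hD s ⟨t, ht, hst⟩
  have hrpos : ∀ s : ℝ, 0 < ‖γ s - p‖ := fun s => norm_pos_iff.2 (sub_ne_zero.2 (hps s))
  have hsign : ∀ s ∈ T, Real.sign (deriv g (f s)) =
      Real.sign (v.re * (deriv γ s).im - v.im * (deriv γ s).re) := by
    intro s hs
    rw [(hmain s hs).deriv]
    rcases (htrans s hs).lt_or_gt with h | h
    · rw [Real.sign_of_neg h, Real.sign_of_neg
        (div_neg_of_neg_of_pos (div_neg_of_neg_of_pos h (hrpos s)) (by linarith))]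
    · rw [Real.sign_of_pos h, Real.sign_of_pos
        (div_pos (div_pos h (hrpos s)) (by linarith))]
  have hderiv_fact : ∀ x ∈ S, HasDerivAt g (deriv g x) x ∧ deriv g x ≠ 0 := by
    intro x hx
    obtain ⟨s, hs, rfl⟩ := Finset.mem_image.1 hx
    constructor
    · rw [(hmain s hs).deriv]; exact hmain s hs
    · rw [(hmain s hs).deriv]
      rcases (htrans s hs).lt_or_gt with h | h
      · exact ne_of_lt (div_neg_of_neg_of_pos (div_neg_of_neg_of_pos h (hrpos s)) (by linarith))
      · exact ne_of_gt (div_pos (div_pos h (hrpos s)) (by linarith))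
  have hinj : ∀ x ∈ T, ∀ y ∈ T, f x = f y → x = y := by
    intro x hx y hy hxy
    obtain ⟨hx0, hx1⟩ := hTmem x hx
    obtain ⟨hy0, hy1⟩ := hTmem y hy
    rw [hf_def] at hxy
    simp only at hxy
    split_ifs at hxy with h1 h2 h2 <;> linarith
  have hcount := counting hg_cont S (show a ≤ a + 1 by linarith) hS_sub hchar hderiv_fact
  have hθa1 : θ (a+1) = θ a + 2 * Real.pi * N := by
    have h := hconst a
    rw [hN] at h
    linarith
  have hga1 : g (a+1) = g a + N := by
    rw [hg_def]; simp only; rw [hθa1]; field_simp; ring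
  have hfloor : ((⌊g (a+1)⌋ : ℝ)) - ⌊g a⌋ = N := by
    rw [hga1, Int.floor_add_intCast]
    push_cast; ring
  rw [hcount] at hfloor
  have hsum : ∑ x ∈ S, Real.sign (deriv g x) =
      ∑ s ∈ T, Real.sign (v.re * (deriv γ s).im - v.im * (deriv γ s).re) := by
    rw [hS_def, Finset.sum_image hinj]
    exact Finset.sum_congr rfl (fun s hs => hsign s hs)
  rw [hsum] at hfloor
  rw [hN, hfloor]
end

section
/- If a univariate real polynomial is nonnegative on all of ℝ, then it is a sum of squares of two real polynomials. -/
open Polynomial Filter Set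

private lemma aux_quot_nonneg (d h : Polynomial ℝ) (hd0 : d ≠ 0)
    (hd : ∀ t : ℝ, 0 ≤ d.eval t) (hp : ∀ t : ℝ, 0 ≤ (d * h).eval t) :
    ∀ t : ℝ, 0 ≤ h.eval t := by
  intro t₀
  by_contra hneg
  push_neg at hneg
  have hev1 : ∀ᶠ t in nhdsWithin t₀ {t₀}ᶜ, h.eval t < 0 := by
    apply Filter.Eventually.filter_mono nhdsWithin_le_nhds
    have ho : IsOpen {t : ℝ | h.eval t < 0} :=
      isOpen_lt (Polynomial.continuous h) continuous_const
    exact Filter.eventually_iff.mpr (ho.mem_nhds hneg)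
  have hfin : {t : ℝ | d.IsRoot t}.Finite := Polynomial.finite_setOf_isRoot hd0
  have hev2 : ∀ᶠ t in nhdsWithin t₀ {t₀}ᶜ, d.eval t ≠ 0 := by
    have hfin' : ({t : ℝ | d.IsRoot t} \ {t₀}).Finite := hfin.diff
    have hcl : IsOpen ({t : ℝ | d.IsRoot t} \ {t₀})ᶜ := hfin'.isClosed.isOpen_compl
    have hmem : t₀ ∈ ({t : ℝ | d.IsRoot t} \ {t₀})ᶜ := by simp
    have h1 : ∀ᶠ t in nhdsWithin t₀ {t₀}ᶜ, t ∉ ({t : ℝ | d.IsRoot t} \ {t₀}) :=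
      Filter.Eventually.filter_mono nhdsWithin_le_nhds
        (Filter.eventually_iff.mpr (hcl.mem_nhds hmem))
    have h2 : ∀ᶠ t in nhdsWithin t₀ {t₀}ᶜ, t ∈ ({t₀}ᶜ : Set ℝ) :=
      eventually_mem_nhdsWithin
    filter_upwards [h1, h2] with t ht1 ht2 hroot
    exact ht1 ⟨hroot, ht2⟩
  have : ∃ t : ℝ, h.eval t < 0 ∧ d.eval t ≠ 0 := (hev1.and hev2).exists
  obtain ⟨t, ht1, ht2⟩ := this
  have hdt : 0 < d.eval t := lt_of_le_of_ne (hd t) (Ne.symm ht2)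
  have := hp t
  rw [Polynomial.eval_mul] at this
  nlinarith

private lemma aux_root_sq_dvd (p : Polynomial ℝ) (hp : ∀ t : ℝ, 0 ≤ p.eval t)
    {a : ℝ} (ha : p.IsRoot a) : (X - C a) ^ 2 ∣ p := by
  obtain ⟨g, hg⟩ := (dvd_iff_isRoot.mpr ha)
  have hga : g.IsRoot a := by
    by_contra hg0
    have hc : Continuous fun t : ℝ => g.eval t := Polynomial.continuous g
    rcases lt_or_gt_of_ne hg0 with hlt | hgt
    · -- g.eval a < 0 : pick t > a with g.eval t < 0, then p.eval t < 0
      have ho : IsOpen {t : ℝ | g.eval t < 0} := isOpen_lt hc continuous_const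
      have hev : ∀ᶠ t in nhdsWithin a (Set.Ioi a), g.eval t < 0 :=
        Filter.Eventually.filter_mono nhdsWithin_le_nhds
          (Filter.eventually_iff.mpr (ho.mem_nhds hlt))
      have hev2 : ∀ᶠ t in nhdsWithin a (Set.Ioi a), a < t := eventually_mem_nhdsWithin
      obtain ⟨t, ht1, ht2⟩ := (hev.and hev2).exists
      have := hp t
      rw [hg, Polynomial.eval_mul, Polynomial.eval_sub, Polynomial.eval_X,
        Polynomial.eval_C] at this
      nlinarith
    · have ho : IsOpen {t : ℝ | 0 < g.eval t} := isOpen_lt continuous_const hc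
      have hev : ∀ᶠ t in nhdsWithin a (Set.Iio a), 0 < g.eval t :=
        Filter.Eventually.filter_mono nhdsWithin_le_nhds
          (Filter.eventually_iff.mpr (ho.mem_nhds hgt))
      have hev2 : ∀ᶠ t in nhdsWithin a (Set.Iio a), t < a := eventually_mem_nhdsWithin
      obtain ⟨t, ht1, ht2⟩ := (hev.and hev2).exists
      have := hp t
      rw [hg, Polynomial.eval_mul, Polynomial.eval_sub, Polynomial.eval_X,
        Polynomial.eval_C] at this
      nlinarith
  obtain ⟨k, hk⟩ := (dvd_iff_isRoot.mpr hga)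
  exact ⟨k, by rw [hg, hk]; ring⟩

/-- If a univariate real polynomial is nonnegative on all of `ℝ`, then it is a sum of
squares of two real polynomials. -/
theorem nonneg_poly_eq_sum_two_squares
    (p : Polynomial ℝ) (hp : ∀ t : ℝ, 0 ≤ p.eval t) :
    ∃ q r : Polynomial ℝ, p = q ^ 2 + r ^ 2 := by
  suffices H : ∀ n : ℕ, ∀ p : Polynomial ℝ, (∀ t : ℝ, 0 ≤ p.eval t) → p.natDegree = n →
      ∃ q r : Polynomial ℝ, p = q ^ 2 + r ^ 2 from H p.natDegree p hp rfl
  intro n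
  induction n using Nat.strong_induction_on with
  | _ n ih =>
  intro p hp hn
  subst hn
  by_cases hp0 : p = 0
  · exact ⟨0, 0, by simp [hp0]⟩
  by_cases hdeg : p.natDegree = 0
  · obtain ⟨c, rfl⟩ := Polynomial.natDegree_eq_zero.mp hdeg
    have hc : 0 ≤ c := by simpa using hp 0
    exact ⟨C (Real.sqrt c), 0, by
      rw [← Polynomial.C_pow, Real.sq_sqrt hc]; ring⟩
  -- p has positive degree; get a complex root
  have hdegpos : 0 < p.natDegree := Nat.pos_of_ne_zero hdeg
  have hdpos : 0 < p.degree := Polynomial.natDegree_pos_iff_degree_pos.mp hdegpos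
  obtain ⟨z, hz⟩ : ∃ z : ℂ, (Polynomial.aeval z) p = 0 :=
    IsAlgClosed.exists_aeval_eq_zero ℂ p hdpos.ne'
  -- produce a quadratic divisor d = q0^2 + r0^2
  have key : ∃ d q0 r0 : Polynomial ℝ, d ∣ p ∧ d = q0 ^ 2 + r0 ^ 2 ∧
      d.natDegree = 2 ∧ (∀ t : ℝ, 0 ≤ d.eval t) := by
    by_cases him : z.im = 0
    · -- real root
      lift z to ℝ using him
      erw [Polynomial.aeval_ofReal, RCLike.ofReal_eq_zero] at hz
      refine ⟨(X - C z) ^ 2, X - C z, 0, aux_root_sq_dvd p hp hz, by ring, ?_, ?_⟩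
      · compute_degree!
      · intro t
        simp only [Polynomial.eval_pow, Polynomial.eval_sub, Polynomial.eval_X,
          Polynomial.eval_C]
        positivity
    · have hnorm : ‖z‖ ^ 2 = z.re ^ 2 + z.im ^ 2 := by
        rw [Complex.sq_norm, Complex.normSq_apply]; ring
      refine ⟨X ^ 2 - C (2 * z.re) * X + C (‖z‖ ^ 2), X - C z.re, C z.im,
        p.quadratic_dvd_of_aeval_eq_zero_im_ne_zero hz him, ?_, ?_, ?_⟩
      · rw [hnorm, two_mul, C_add, C_add, C_pow, C_pow]; ring
      · compute_degree!
      · intro t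
        simp only [Polynomial.eval_add, Polynomial.eval_sub, Polynomial.eval_mul,
          Polynomial.eval_pow, Polynomial.eval_X, Polynomial.eval_C]
        nlinarith [hnorm, sq_nonneg (t - z.re), sq_nonneg z.im]
  obtain ⟨d, q0, r0, ⟨h, rfl⟩, hdsq, hdd, hdnn⟩ := key
  have hd0 : d ≠ 0 := by
    intro h0; rw [h0] at hdd; simp at hdd
  have hh0 : h ≠ 0 := by rintro rfl; simp at hp0
  have hhn : ∀ t : ℝ, 0 ≤ h.eval t := aux_quot_nonneg d h hd0 hdnn hp
  have hlt : h.natDegree < (d * h).natDegree := by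
    rw [Polynomial.natDegree_mul hd0 hh0, hdd]; omega
  obtain ⟨q1, r1, hq1⟩ := ih h.natDegree hlt h hhn rfl
  refine ⟨q0 * q1 - r0 * r1, q0 * r1 + r0 * q1, ?_⟩
  rw [hdsq, hq1]; ring
end
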